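/- Let H be a cocommutative bialgebra over a commutative ring R, F a Drinfel'd twist on H with R-matrix ℛ := F₂₁ · F⁻¹ and ℛ⁻¹ = τ(ℛ) = Σ_k R_k ⊗ R^k, and let L be a Lie algebra in H-modules equipped with an H-invariant R-bilinear form b : L × L → R (i.e. Σ b(ρ(h₍₁₎)(v), ρ(h₍₂₎)(w)) = ε(h) · b(v, w) for all h ∈ H) which is cyclic with respect to the bracket: b(v₀, ⁅v₁, v₂⁆) = b(v₂, ⁅v₀, v₁⁆) for all v₀, v₁, v₂ ∈ L. Then the twisted pairing ⟨v, w⟩_⋆ := Σ_k b(f̄^k(v), f̄_k(w)) is braided cyclic with respect to the twisted bracket [x, y]_⋆ := Σ_k ⁅f̄^k(x), f̄_k(y)⁆: for all v₀, v₁, v₂ ∈ L, ⟨v₀, [v₁, v₂]_⋆⟩_⋆ = Σ_{k,l} ⟨R_k(R_l(v₂)), [R^k(v₀), R^l(v₁)]_⋆⟩_⋆. -/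

import Mathlib

open scoped TensorProduct

noncomputable section

/-- `Δ ⊗ id` as an algebra homomorphism `H ⊗ H → (H ⊗ H) ⊗ H`. -/
def comulTensorId (R H : Type*) [CommRing R] [Ring H] [Bialgebra R H] :
    (H ⊗[R] H) →ₐ[R] (H ⊗[R] H) ⊗[R] H :=
  Algebra.TensorProduct.map (Bialgebra.comulAlgHom R H) (AlgHom.id R H)

/-- `id ⊗ Δ` as an algebra homomorphism `H ⊗ H → H ⊗ (H ⊗ H)`. -/
def idTensorComul (R H : Type*) [CommRing R] [Ring H] [Bialgebra R H] :
    (H ⊗[R] H) →ₐ[R] H ⊗[R] (H ⊗[R] H) :=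
  Algebra.TensorProduct.map (AlgHom.id R H) (Bialgebra.comulAlgHom R H)

/-- `F` is a Drinfel'd twist on the bialgebra `H` with two-sided inverse `Finv`:
it is invertible and satisfies the 2-cocycle condition
`(F ⊗ 1) · (Δ ⊗ id)(F) = (1 ⊗ F) · (id ⊗ Δ)(F)` in `H ⊗ H ⊗ H`. -/
def IsDrinfeldTwist (R : Type*) {H : Type*} [CommRing R] [Ring H] [Bialgebra R H]
    (F Finv : H ⊗[R] H) : Prop :=
  F * Finv = 1 ∧ Finv * F = 1 ∧
    (TensorProduct.assoc R H H H) ((F ⊗ₜ[R] (1 : H)) * comulTensorId R H F) =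
      ((1 : H) ⊗ₜ[R] F) * idTensorComul R H F

/-- The `R`-matrix `ℛ := F₂₁ · F⁻¹` associated to a Drinfel'd twist, where
`F₂₁ = τ(F)` and `τ` is the flip of `H ⊗ H`. -/
def Rmat (R : Type*) {H : Type*} [CommRing R] [Ring H] [Bialgebra R H]
    (F Finv : H ⊗[R] H) : H ⊗[R] H :=
  (Algebra.TensorProduct.comm R H H) F * Finv

/-- The bialgebra `H` is cocommutative: `τ ∘ Δ = Δ`. -/
def IsCocommutative (R : Type*) (H : Type*) [CommRing R] [Ring H] [Bialgebra R H] : Prop :=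
  ∀ x : H, (Algebra.TensorProduct.comm R H H) (Coalgebra.comul (R := R) x) =
    Coalgebra.comul (R := R) x

/-- The action of an element of `H ⊗ H` on `M ⊗ N`, acting with the first leg on `M`
and the second leg on `N` through the given representations. -/
def legAct {R H : Type*} [CommRing R] [Ring H] [Algebra R H]
    {M N : Type*} [AddCommGroup M] [Module R M] [AddCommGroup N] [Module R N]
    (ρM : H →ₐ[R] Module.End R M) (ρN : H →ₐ[R] Module.End R N) :
    H ⊗[R] H →ₗ[R] (M ⊗[R] N →ₗ[R] M ⊗[R] N) :=
  (TensorProduct.homTensorHomMap (RingHom.id R) M N M N).comp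
    (TensorProduct.map ρM.toLinearMap ρN.toLinearMap)

/-- The Lie bracket of `L` as an `R`-bilinear map. -/
def lieBil (R L : Type*) [CommRing R] [LieRing L] [LieAlgebra R L] :
    L →ₗ[R] L →ₗ[R] L :=
  LinearMap.mk₂ R (fun x y => ⁅x, y⁆) add_lie smul_lie lie_add lie_smul

/-- `ρ` makes the `R`-Lie algebra `L` into a Lie algebra in `H`-modules:
`ρ(h)⁅x, y⁆ = Σ ⁅ρ(h₍₁₎)(x), ρ(h₍₂₎)(y)⁆`. -/
def IsHLieAlgebra (R : Type*) {H L : Type*} [CommRing R] [Ring H] [Bialgebra R H]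
    [LieRing L] [LieAlgebra R L] (ρ : H →ₐ[R] Module.End R L) : Prop :=
  ∀ (h : H) (x y : L),
    ρ h ⁅x, y⁆ =
      TensorProduct.lift (lieBil R L)
        (legAct ρ ρ (Coalgebra.comul (R := R) h) (x ⊗ₜ[R] y))

/-- The twisted bracket `[x, y]_⋆ := Σ ⁅f̄ᵏ(x), f̄ₖ(y)⁆`, as a linear map on `L ⊗ L`. -/
def starBracket {R H L : Type*} [CommRing R] [Ring H] [Bialgebra R H]
    [LieRing L] [LieAlgebra R L] (ρ : H →ₐ[R] Module.End R L) (Finv : H ⊗[R] H) :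
    L ⊗[R] L →ₗ[R] L :=
  (TensorProduct.lift (lieBil R L)).comp (legAct ρ ρ Finv)

/-- The twisted pairing `⟨v, w⟩_⋆ := Σ b(f̄ᵏ(v), f̄ₖ(w))`, as a linear map on `V ⊗ V`. -/
def starPair {R H V : Type*} [CommRing R] [Ring H] [Bialgebra R H]
    [AddCommGroup V] [Module R V] (ρ : H →ₐ[R] Module.End R V)
    (b : V →ₗ[R] V →ₗ[R] R) (Finv : H ⊗[R] H) : V ⊗[R] V →ₗ[R] R :=
  (TensorProduct.lift b).comp (legAct ρ ρ Finv)

/-- The action of an element of `H ⊗ (H ⊗ H)` on `L ⊗ (L ⊗ L)`, acting leg by leg. -/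
def legAct3 {R H L : Type*} [CommRing R] [Ring H] [Algebra R H]
    [AddCommGroup L] [Module R L] (ρ : H →ₐ[R] Module.End R L) :
    H ⊗[R] (H ⊗[R] H) →ₗ[R]
      (L ⊗[R] (L ⊗[R] L) →ₗ[R] L ⊗[R] (L ⊗[R] L)) :=
  (TensorProduct.homTensorHomMap (RingHom.id R) L (L ⊗[R] L) L (L ⊗[R] L)).comp
    (TensorProduct.map ρ.toLinearMap (legAct ρ ρ))

section StarAux

open TensorProduct

variable {R H : Type*} [CommRing R] [Ring H] [Bialgebra R H]

local notation "τ" => Algebra.TensorProduct.comm R H H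

/-- leg embedding 1,2. -/
def e12 : (H ⊗[R] H) →ₐ[R] H ⊗[R] (H ⊗[R] H) :=
  Algebra.TensorProduct.map (AlgHom.id R H) Algebra.TensorProduct.includeLeft

/-- leg embedding 1,3. -/
def e13 : (H ⊗[R] H) →ₐ[R] H ⊗[R] (H ⊗[R] H) :=
  Algebra.TensorProduct.map (AlgHom.id R H) Algebra.TensorProduct.includeRight

/-- leg embedding 2,3. -/
def e23 : (H ⊗[R] H) →ₐ[R] H ⊗[R] (H ⊗[R] H) :=
  Algebra.TensorProduct.includeRight

/-- associator as algebra iso -/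
def aA : ((H ⊗[R] H) ⊗[R] H) ≃ₐ[R] H ⊗[R] (H ⊗[R] H) :=
  Algebra.TensorProduct.assoc R R R H H H

/-- `Δ ⊗ id` landing in `H ⊗ (H ⊗ H)`. -/
def dc1 : (H ⊗[R] H) →ₐ[R] H ⊗[R] (H ⊗[R] H) :=
  (aA : ((H ⊗[R] H) ⊗[R] H) ≃ₐ[R] H ⊗[R] (H ⊗[R] H)).toAlgHom.comp (comulTensorId R H)

/-- swap of legs 2 3 -/
def t23 : (H ⊗[R] (H ⊗[R] H)) ≃ₐ[R] H ⊗[R] (H ⊗[R] H) :=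
  Algebra.TensorProduct.congr AlgEquiv.refl (Algebra.TensorProduct.comm R H H)

/-- inverse cyclic rotation `a ⊗ (b ⊗ c) ↦ b ⊗ (c ⊗ a)` -/
def sig : (H ⊗[R] (H ⊗[R] H)) ≃ₐ[R] H ⊗[R] (H ⊗[R] H) :=
  (Algebra.TensorProduct.comm R H (H ⊗[R] H)).trans aA

lemma e12_tmul (a b : H) : (e12 (a ⊗ₜ[R] b) : H ⊗[R] (H ⊗[R] H)) = a ⊗ₜ (b ⊗ₜ 1) := by
  simp [e12]

lemma e13_tmul (a b : H) : (e13 (a ⊗ₜ[R] b) : H ⊗[R] (H ⊗[R] H)) = a ⊗ₜ (1 ⊗ₜ b) := by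
  simp [e13]

lemma e23_apply (u : H ⊗[R] H) : (e23 u : H ⊗[R] (H ⊗[R] H)) = (1 : H) ⊗ₜ u := rfl

lemma aA_tmul (a b c : H) : (aA ((a ⊗ₜ[R] b) ⊗ₜ[R] c) : H ⊗[R] (H ⊗[R] H)) = a ⊗ₜ (b ⊗ₜ c) := by
  simp [aA]

lemma dc1_tmul (a b : H) :
    (dc1 (a ⊗ₜ[R] b) : H ⊗[R] (H ⊗[R] H)) = aA ((Coalgebra.comul (R := R) a) ⊗ₜ[R] b) := by
  simp [dc1, comulTensorId]

lemma dc2_tmul (a b : H) :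
    (idTensorComul R H (a ⊗ₜ[R] b) : H ⊗[R] (H ⊗[R] H)) = a ⊗ₜ (Coalgebra.comul (R := R) b) := by
  simp [idTensorComul]

lemma t23_tmul (a : H) (w : H ⊗[R] H) :
    (t23 (a ⊗ₜ[R] w) : H ⊗[R] (H ⊗[R] H)) = a ⊗ₜ τ w := by
  simp [t23, Algebra.TensorProduct.congr_apply]

lemma sig_tmul (a : H) (w : H ⊗[R] H) :
    (sig (a ⊗ₜ[R] w) : H ⊗[R] (H ⊗[R] H)) = aA (w ⊗ₜ[R] a) := by
  simp [sig, Algebra.TensorProduct.comm_tmul]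

lemma tau_tau (u : H ⊗[R] H) : τ (τ u) = u := by
  induction u using TensorProduct.induction_on with
  | zero => simp
  | tmul a b => simp [Algebra.TensorProduct.comm_tmul]
  | add x y hx hy => simp [map_add, hx, hy]

lemma assocLin_eq (x : (H ⊗[R] H) ⊗[R] H) :
    (TensorProduct.assoc R H H H) x = (aA x : H ⊗[R] (H ⊗[R] H)) := rfl

lemma aA_tmul_one (u : H ⊗[R] H) : (aA (u ⊗ₜ[R] (1 : H)) : H ⊗[R] (H ⊗[R] H)) = e12 u := by
  induction u using TensorProduct.induction_on with
  | zero => simp [TensorProduct.zero_tmul]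
  | tmul a b => simp [aA_tmul, e12_tmul]
  | add x y hx hy => simp [TensorProduct.add_tmul, hx, hy]

lemma sig_e23 (u : H ⊗[R] H) : sig (e23 u : H ⊗[R] (H ⊗[R] H)) = e12 u := by
  rw [e23_apply, sig_tmul, aA_tmul_one]

lemma sig_e12 (u : H ⊗[R] H) : sig (e12 u : H ⊗[R] (H ⊗[R] H)) = e13 (τ u) := by
  induction u using TensorProduct.induction_on with
  | zero => simp
  | tmul a b => simp [e12_tmul, sig_tmul, aA_tmul, e13_tmul,
      Algebra.TensorProduct.comm_tmul]
  | add x y hx hy => simp [map_add, hx, hy]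

lemma sig_e13 (u : H ⊗[R] H) : sig (e13 u : H ⊗[R] (H ⊗[R] H)) = e23 (τ u) := by
  induction u using TensorProduct.induction_on with
  | zero => simp
  | tmul a b => simp [e13_tmul, sig_tmul, aA_tmul, e23_apply,
      Algebra.TensorProduct.comm_tmul]
  | add x y hx hy => simp [map_add, hx, hy]

lemma sig_dc2 (u : H ⊗[R] H) :
    sig (idTensorComul R H u : H ⊗[R] (H ⊗[R] H)) = dc1 (τ u) := by
  induction u using TensorProduct.induction_on with
  | zero => simp
  | tmul a b => simp [dc2_tmul, sig_tmul, dc1_tmul, Algebra.TensorProduct.comm_tmul]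
  | add x y hx hy => simp [map_add, hx, hy]

lemma sig_aA (w : H ⊗[R] H) (c : H) :
    sig (aA (w ⊗ₜ[R] c) : H ⊗[R] (H ⊗[R] H)) = t23 (aA ((τ w) ⊗ₜ[R] c)) := by
  induction w using TensorProduct.induction_on with
  | zero => simp [TensorProduct.zero_tmul]
  | tmul x y => simp [aA_tmul, sig_tmul, Algebra.TensorProduct.comm_tmul, t23_tmul]
  | add x y hx hy => simp [TensorProduct.add_tmul, hx, hy]

lemma sig_dc1 (hcc : IsCocommutative R H) (u : H ⊗[R] H) :
    sig (dc1 u : H ⊗[R] (H ⊗[R] H)) = t23 (dc1 u) := by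
  induction u using TensorProduct.induction_on with
  | zero => simp
  | tmul a b => rw [dc1_tmul, sig_aA, hcc a]
  | add x y hx hy => simp [map_add, hx, hy]

lemma t23_dc2 (hcc : IsCocommutative R H) (u : H ⊗[R] H) :
    t23 (idTensorComul R H u : H ⊗[R] (H ⊗[R] H)) = idTensorComul R H u := by
  induction u using TensorProduct.induction_on with
  | zero => simp
  | tmul a b => rw [dc2_tmul, t23_tmul, hcc b]
  | add x y hx hy => simp [map_add, hx, hy]

lemma t23_e12 (u : H ⊗[R] H) : t23 (e12 u : H ⊗[R] (H ⊗[R] H)) = e13 u := by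
  induction u using TensorProduct.induction_on with
  | zero => simp
  | tmul a b => simp [e12_tmul, t23_tmul, e13_tmul, Algebra.TensorProduct.comm_tmul]
  | add x y hx hy => simp [map_add, hx, hy]

lemma t23_e23 (u : H ⊗[R] H) : t23 (e23 u : H ⊗[R] (H ⊗[R] H)) = e23 (τ u) := by
  rw [e23_apply, t23_tmul, e23_apply]

lemma cocycleT3 {F Finv : H ⊗[R] H} (hF : IsDrinfeldTwist R F Finv) :
    (e12 F : H ⊗[R] (H ⊗[R] H)) * dc1 F = e23 F * idTensorComul R H F := by
  have h := hF.2.2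
  rw [assocLin_eq] at h
  rw [map_mul, aA_tmul_one] at h
  exact h

end StarAux

section StarAux2

open TensorProduct

variable {R H : Type*} [CommRing R] [Ring H] [Bialgebra R H]

local notation "τ" => Algebra.TensorProduct.comm R H H

lemma cancel_aux {G : Type*} [Monoid G] {a b : G} (x : G) (h : a * b = 1) :
    a * (b * x) = x := by rw [← mul_assoc, h, one_mul]

/-- The big element identity in `H ⊗ (H ⊗ H)`. -/
lemma elem_identity (hcc : IsCocommutative R H) {F Finv : H ⊗[R] H}
    (hF : IsDrinfeldTwist R F Finv) :
    sig ((idTensorComul R H Finv * e23 Finv) *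
        (e12 (τ (Rmat R F Finv)) * e13 (τ (Rmat R F Finv))) : H ⊗[R] (H ⊗[R] H)) =
      idTensorComul R H Finv * e23 Finv := by
  have cocycle := cocycleT3 (R := R) (H := H) hF
  obtain ⟨hFA, hAF, -⟩ := hF
  have hτAF : τ Finv * τ F = 1 := by rw [← map_mul, hAF, map_one]
  have Rm : (Rmat R F Finv) = τ F * Finv := rfl
  have h12 : (e12 Finv : H ⊗[R] (H ⊗[R] H)) * e12 F = 1 := by rw [← map_mul, hAF, map_one]
  have h23 : (e23 Finv : H ⊗[R] (H ⊗[R] H)) * e23 F = 1 := by rw [← map_mul, hAF, map_one]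
  have hd2 : (idTensorComul R H F : H ⊗[R] (H ⊗[R] H)) * idTensorComul R H Finv = 1 := by
    rw [← map_mul, hFA, map_one]
  -- K1 : dc1 F = e12 Finv * (e23 F * dc2 F)
  have K1 : (dc1 F : H ⊗[R] (H ⊗[R] H)) = e12 Finv * (e23 F * idTensorComul R H F) := by
    rw [← cocycle, cancel_aux _ h12]
  -- K2 : dc2 F = e23 Finv * (e12 F * dc1 F)
  have K2 : (idTensorComul R H F : H ⊗[R] (H ⊗[R] H)) = e23 Finv * (e12 F * dc1 F) := by
    rw [cocycle, cancel_aux _ h23]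
  -- K3 : sig (dc1 F) = e13 Finv * (e23 (τ F) * dc2 F)
  have K3 : sig (dc1 F : H ⊗[R] (H ⊗[R] H)) =
      e13 Finv * (e23 (τ F) * idTensorComul R H F) := by
    rw [sig_dc1 hcc, K1, map_mul, map_mul, t23_e12, t23_e23, t23_dc2 hcc]
  -- K4 : dc1 (τ F) = e12 Finv * (e13 (τ F) * (e13 Finv * (e23 (τ F) * dc2 F)))
  have K4 : (dc1 (τ F) : H ⊗[R] (H ⊗[R] H)) =
      e12 Finv * (e13 (τ F) * (e13 Finv * (e23 (τ F) * idTensorComul R H F))) := by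
    have h := congrArg (sig (R := R) (H := H)) K2
    rw [sig_dc2, map_mul, map_mul, sig_e23, sig_e12, K3] at h
    exact h
  -- K5
  have K5 : (dc1 (τ F) : H ⊗[R] (H ⊗[R] H)) * (idTensorComul R H Finv * e23 Finv) =
      e12 Finv * (e13 (Rmat R F Finv) * e23 (Rmat R F Finv)) := by
    rw [K4]
    simp only [mul_assoc]
    rw [cancel_aux _ hd2, ← mul_assoc (e13 (τ F) : H ⊗[R] (H ⊗[R] H)), ← map_mul, ← map_mul,
      ← Rm]
  -- K6
  have K6 : (dc1 (τ Finv) : H ⊗[R] (H ⊗[R] H)) * dc1 (τ F) = 1 := by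
    rw [← map_mul, hτAF, map_one]
  -- assemble
  rw [map_mul, map_mul, map_mul, sig_dc2, sig_e23, sig_e12, sig_e13, tau_tau]
  simp only [mul_assoc]
  rw [← K5, cancel_aux _ K6]

end StarAux2

section StarAux3

open TensorProduct

variable {R H : Type*} [CommRing R] [Ring H] [Bialgebra R H]
variable {M N : Type*} [AddCommGroup M] [Module R M] [AddCommGroup N] [Module R N]

lemma legAct_tmul (ρM : H →ₐ[R] Module.End R M) (ρN : H →ₐ[R] Module.End R N) (h h' : H) :
    legAct ρM ρN (h ⊗ₜ[R] h') = TensorProduct.map (ρM h) (ρN h') := by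
  simp [legAct]

lemma legAct_one (ρM : H →ₐ[R] Module.End R M) (ρN : H →ₐ[R] Module.End R N) :
    legAct ρM ρN 1 = LinearMap.id := by
  rw [Algebra.TensorProduct.one_def, legAct_tmul, map_one, map_one]
  exact TensorProduct.map_id

lemma legAct_mul (ρM : H →ₐ[R] Module.End R M) (ρN : H →ₐ[R] Module.End R N)
    (u v : H ⊗[R] H) :
    legAct ρM ρN (u * v) = (legAct ρM ρN u).comp (legAct ρM ρN v) := by
  induction u using TensorProduct.induction_on with
  | zero => simp
  | add x y hx hy => simp only [add_mul, map_add, hx, hy, LinearMap.add_comp]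
  | tmul h h' =>
    induction v using TensorProduct.induction_on with
    | zero => simp
    | add x y hx hy => simp only [mul_add, map_add, hx, hy, LinearMap.comp_add]
    | tmul g g' =>
      rw [Algebra.TensorProduct.tmul_mul_tmul, legAct_tmul, legAct_tmul, legAct_tmul,
        map_mul, map_mul]
      exact TensorProduct.map_comp _ _ _ _

variable {L : Type*} [AddCommGroup L] [Module R L]

lemma legAct3_tmul (ρ : H →ₐ[R] Module.End R L) (a : H) (w : H ⊗[R] H) :
    legAct3 ρ (a ⊗ₜ[R] w) = TensorProduct.map (ρ a) (legAct ρ ρ w) := by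
  simp [legAct3]

lemma legAct3_mul (ρ : H →ₐ[R] Module.End R L) (u v : H ⊗[R] (H ⊗[R] H)) :
    legAct3 ρ (u * v) = (legAct3 ρ u).comp (legAct3 ρ v) := by
  induction u using TensorProduct.induction_on with
  | zero => simp
  | add x y hx hy => simp only [add_mul, map_add, hx, hy, LinearMap.add_comp]
  | tmul h h' =>
    induction v using TensorProduct.induction_on with
    | zero => simp
    | add x y hx hy => simp only [mul_add, map_add, hx, hy, LinearMap.comp_add]
    | tmul g g' =>
      rw [Algebra.TensorProduct.tmul_mul_tmul, legAct3_tmul, legAct3_tmul, legAct3_tmul,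
        map_mul, legAct_mul]
      exact TensorProduct.map_comp _ _ _ _

/-- extensionality for maps out of triple tensor products -/
lemma tensorExt3 {A B C W : Type*} [AddCommGroup A] [Module R A] [AddCommGroup B] [Module R B]
    [AddCommGroup C] [Module R C] [AddCommGroup W] [Module R W]
    {f g : A ⊗[R] (B ⊗[R] C) →ₗ[R] W}
    (h : ∀ a b c, f (a ⊗ₜ (b ⊗ₜ c)) = g (a ⊗ₜ (b ⊗ₜ c))) : f = g := by
  apply TensorProduct.ext'
  intro a q
  induction q using TensorProduct.induction_on with
  | zero => simp
  | tmul y z => exact h a y z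
  | add q1 q2 h1 h2 => rw [TensorProduct.tmul_add, map_add, map_add, h1, h2]

end StarAux3

section StarAux4

open TensorProduct

variable {R H L : Type*} [CommRing R] [Ring H] [Bialgebra R H]
  [LieRing L] [LieAlgebra R L]

/-- `x ⊗ (y ⊗ z) ↦ b x ⁅y, z⁆` as a linear map. -/
def Tform (b : L →ₗ[R] L →ₗ[R] R) : L ⊗[R] (L ⊗[R] L) →ₗ[R] R :=
  (TensorProduct.lift b).comp
    (TensorProduct.map LinearMap.id (TensorProduct.lift (lieBil R L)))

lemma Tform_tmul (b : L →ₗ[R] L →ₗ[R] R) (x y z : L) :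
    Tform b (x ⊗ₜ (y ⊗ₜ z)) = b x ⁅y, z⁆ := by
  simp [Tform, lieBil]

/-- cyclic rotation `x ⊗ (y ⊗ z) ↦ z ⊗ (x ⊗ y)`. -/
def cyc : L ⊗[R] (L ⊗[R] L) →ₗ[R] L ⊗[R] (L ⊗[R] L) :=
  (TensorProduct.comm R (L ⊗[R] L) L).toLinearMap.comp
    (TensorProduct.assoc R L L L).symm.toLinearMap

lemma cyc_tmul (x y z : L) : (cyc (x ⊗ₜ (y ⊗ₜ z)) : L ⊗[R] (L ⊗[R] L)) = z ⊗ₜ (x ⊗ₜ y) := by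
  simp [cyc]

lemma Tform_cyc (b : L →ₗ[R] L →ₗ[R] R)
    (hbcyc : ∀ v₀ v₁ v₂ : L, b v₀ ⁅v₁, v₂⁆ = b v₂ ⁅v₀, v₁⁆) :
    (Tform b).comp (cyc (R := R) (L := L)) = Tform b := by
  apply tensorExt3
  intro x y z
  rw [LinearMap.comp_apply, cyc_tmul, Tform_tmul, Tform_tmul]
  exact (hbcyc x y z).symm

variable (ρ : H →ₐ[R] Module.End R L)

lemma rho_lift (hL : IsHLieAlgebra R ρ) (h : H) (q : L ⊗[R] L) :
    ρ h (TensorProduct.lift (lieBil R L) q) =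
      TensorProduct.lift (lieBil R L) (legAct ρ ρ (Coalgebra.comul (R := R) h) q) := by
  induction q using TensorProduct.induction_on with
  | zero => simp
  | tmul x y =>
    have := hL h x y
    simpa [lieBil] using this
  | add q1 q2 h1 h2 => simp only [map_add, LinearMap.map_add, h1, h2]

lemma key2 (hL : IsHLieAlgebra R ρ) (u : H ⊗[R] H) (x : L) (q : L ⊗[R] L) :
    legAct ρ ρ u (x ⊗ₜ (TensorProduct.lift (lieBil R L) q)) =
      TensorProduct.map LinearMap.id (TensorProduct.lift (lieBil R L))
        (legAct3 ρ (idTensorComul R H u) (x ⊗ₜ q)) := by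
  induction u using TensorProduct.induction_on with
  | zero => simp
  | tmul h h' =>
    rw [legAct_tmul, dc2_tmul, legAct3_tmul, TensorProduct.map_tmul,
      TensorProduct.map_tmul, TensorProduct.map_tmul, rho_lift ρ hL, LinearMap.id_coe, id_eq]
  | add u1 u2 h1 h2 => simp only [map_add, LinearMap.add_apply, h1, h2]

lemma key3 (u : H ⊗[R] H) (x : L) (q : L ⊗[R] L) :
    legAct3 ρ (e23 u : H ⊗[R] (H ⊗[R] H)) (x ⊗ₜ q) = x ⊗ₜ legAct ρ ρ u q := by
  rw [e23_apply, legAct3_tmul, TensorProduct.map_tmul, map_one, Module.End.one_apply]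

lemma expand (hL : IsHLieAlgebra R ρ) (b : L →ₗ[R] L →ₗ[R] R) (A : H ⊗[R] H) :
    (starPair ρ b A).comp (TensorProduct.map LinearMap.id (starBracket ρ A)) =
      (Tform b).comp (legAct3 ρ ((idTensorComul R H A : H ⊗[R] (H ⊗[R] H)) * e23 A)) := by
  apply TensorProduct.ext'
  intro x q
  rw [LinearMap.comp_apply, LinearMap.comp_apply, TensorProduct.map_tmul, LinearMap.id_coe,
    id_eq, legAct3_mul, LinearMap.comp_apply, key3]
  exact congrArg (TensorProduct.lift b) (key2 ρ hL A x (legAct ρ ρ A q))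

lemma cyc_legAct3 (Z : H ⊗[R] (H ⊗[R] H)) :
    (legAct3 ρ Z).comp (cyc (R := R) (L := L)) = cyc.comp (legAct3 ρ (sig Z)) := by
  induction Z using TensorProduct.induction_on with
  | zero => simp
  | add x y hx hy => simp only [map_add, LinearMap.add_comp, LinearMap.comp_add, hx, hy]
  | tmul a w =>
    induction w using TensorProduct.induction_on with
    | zero => simp [TensorProduct.tmul_zero]
    | add x y hx hy =>
      simp only [TensorProduct.tmul_add, map_add, LinearMap.add_comp, LinearMap.comp_add,
        hx, hy]
    | tmul bb c =>
      apply tensorExt3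
      intro x y z
      rw [LinearMap.comp_apply, LinearMap.comp_apply, cyc_tmul, sig_tmul, aA_tmul,
        legAct3_tmul, legAct3_tmul, TensorProduct.map_tmul, TensorProduct.map_tmul,
        legAct_tmul, legAct_tmul, TensorProduct.map_tmul, TensorProduct.map_tmul, cyc_tmul]

end StarAux4

/-- For a Drinfel'd twist on a cocommutative bialgebra `H` and a Lie
algebra `L` in `H`-modules with an `H`-invariant bilinear form `b` that is cyclic with
respect to the bracket, the twisted pairing is braided cyclic with respect to the
twisted bracket:
`⟨v₀, [v₁, v₂]_⋆⟩_⋆ = Σ_{k,l} ⟨R_k(R_l(v₂)), [R^k(v₀), R^l(v₁)]_⋆⟩_⋆`,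
where `ℛ⁻¹ = τ(ℛ) = Σ_k R_k ⊗ R^k`. -/
theorem starPair_braided_cyclic
    (R : Type*) [CommRing R] (H : Type*) [Ring H] [Bialgebra R H]
    (hcc : IsCocommutative R H)
    (L : Type*) [LieRing L] [LieAlgebra R L]
    (ρ : H →ₐ[R] Module.End R L) (hL : IsHLieAlgebra R ρ)
    (b : L →ₗ[R] L →ₗ[R] R)
    (hbinv : ∀ (h : H) (v w : L),
      TensorProduct.lift b (legAct ρ ρ (Coalgebra.comul (R := R) h) (v ⊗ₜ[R] w)) =
        Coalgebra.counit (R := R) h * b v w)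
    (hbcyc : ∀ v₀ v₁ v₂ : L, b v₀ ⁅v₁, v₂⁆ = b v₂ ⁅v₀, v₁⁆)
    (F Finv : H ⊗[R] H) (hF : IsDrinfeldTwist R F Finv) :
    ∀ v₀ v₁ v₂ : L,
      starPair ρ b Finv (v₀ ⊗ₜ[R] (starBracket ρ Finv (v₁ ⊗ₜ[R] v₂))) =
        ((starPair ρ b Finv).comp
            (TensorProduct.map LinearMap.id (starBracket ρ Finv)))
          (legAct3 ρ
            (((Algebra.TensorProduct.map (AlgHom.id R H)
                  Algebra.TensorProduct.includeLeft)
                ((Algebra.TensorProduct.comm R H H) (Rmat R F Finv))) *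
              ((Algebra.TensorProduct.map (AlgHom.id R H)
                  Algebra.TensorProduct.includeRight)
                ((Algebra.TensorProduct.comm R H H) (Rmat R F Finv))))
            (v₂ ⊗ₜ[R] (v₀ ⊗ₜ[R] v₁))) := by
  intro v₀ v₁ v₂
  change starPair ρ b Finv (v₀ ⊗ₜ[R] (starBracket ρ Finv (v₁ ⊗ₜ[R] v₂))) =
    ((starPair ρ b Finv).comp (TensorProduct.map LinearMap.id (starBracket ρ Finv)))
      ((legAct3 ρ)
        ((e12 ((Algebra.TensorProduct.comm R H H) (Rmat R F Finv)) *
          e13 ((Algebra.TensorProduct.comm R H H) (Rmat R F Finv))) : H ⊗[R] (H ⊗[R] H))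
        (v₂ ⊗ₜ[R] (v₀ ⊗ₜ[R] v₁)))
  have hexp := expand ρ hL b Finv
  have hL1 : starPair ρ b Finv (v₀ ⊗ₜ[R] (starBracket ρ Finv (v₁ ⊗ₜ[R] v₂))) =
      ((starPair ρ b Finv).comp (TensorProduct.map LinearMap.id (starBracket ρ Finv)))
        (v₀ ⊗ₜ[R] (v₁ ⊗ₜ[R] v₂)) := by
    rw [LinearMap.comp_apply, TensorProduct.map_tmul, LinearMap.id_coe, id_eq]
  rw [hL1, hexp, LinearMap.comp_apply, LinearMap.comp_apply,
    ← LinearMap.comp_apply (legAct3 ρ _) (legAct3 ρ _), ← legAct3_mul]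
  have hη : (v₂ ⊗ₜ[R] (v₀ ⊗ₜ[R] v₁) : L ⊗[R] (L ⊗[R] L)) = cyc (v₀ ⊗ₜ (v₁ ⊗ₜ v₂)) :=
    (cyc_tmul v₀ v₁ v₂).symm
  rw [hη, ← LinearMap.comp_apply (legAct3 ρ _) cyc, cyc_legAct3, LinearMap.comp_apply,
    ← LinearMap.comp_apply (Tform b) cyc, Tform_cyc b hbcyc, elem_identity hcc hF]
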